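/- The average potential energy per degree of freedom of the hypercubic model, ⟨v⟩(β;N) = v_c(b^N − 2a^N)e^{−βNv_c} / (2a^N + (b^N − 2a^N)e^{−βNv_c}), converges as N → ∞ to 0 if β > β_c and to v_c if 0 < β < β_c, where β_c = log(b/a)/v_c. -/

import Mathlib

open Filter Real

/-- The average potential energy per degree of freedom of the
hypercubic model, `⟨v⟩(β;N) = v_c (b^N − 2a^N) e^{−β N v_c} / Z_N(β)` with
`Z_N(β) = 2a^N + (b^N − 2a^N) e^{−β N v_c}`, converges as `N → ∞` to `0` if
`β > β_c` and to `v_c` if `0 < β < β_c`, where `β_c = log(b/a)/v_c`. -/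
theorem hypercubic_average_energy_limit
    (a b vc β : ℝ) (ha : 0 < a) (hab : 2 * a < b) (hvc : 0 < vc) :
    (β > Real.log (b / a) / vc →
      Tendsto (fun N : ℕ =>
          vc * ((b ^ N - 2 * a ^ N) * Real.exp (-(β * N * vc))) /
            (2 * a ^ N + (b ^ N - 2 * a ^ N) * Real.exp (-(β * N * vc))))
        atTop (nhds 0)) ∧
    (0 < β → β < Real.log (b / a) / vc →
      Tendsto (fun N : ℕ =>
          vc * ((b ^ N - 2 * a ^ N) * Real.exp (-(β * N * vc))) /
            (2 * a ^ N + (b ^ N - 2 * a ^ N) * Real.exp (-(β * N * vc))))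
        atTop (nhds vc)) := by
  have hb : 0 < b := by linarith
  have hba1 : 1 < b / a := by rw [lt_div_iff₀ ha]; linarith
  set c := Real.exp (-(β * vc)) with hc
  have hc0 : 0 < c := Real.exp_pos _
  have hexp : ∀ N : ℕ, Real.exp (-(β * N * vc)) = c ^ N := by
    intro N
    rw [hc, ← Real.exp_nat_mul]
    ring_nf
  constructor
  · intro hβ
    have hβ0 : 0 < β := lt_trans (div_pos (Real.log_pos hba1) hvc) hβ
    have hc1 : c < 1 := by
      rw [hc]
      apply Real.exp_lt_one_iff.mpr
      nlinarith
    have hlog : Real.log (b / a) < β * vc := by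
      have := (div_lt_iff₀ hvc).mp hβ
      linarith
    have hr1 : b * c / a < 1 := by
      have h1 : b / a < Real.exp (β * vc) := by
        calc b / a = Real.exp (Real.log (b / a)) := (Real.exp_log (by positivity)).symm
        _ < Real.exp (β * vc) := Real.exp_lt_exp.mpr hlog
      have h2 : Real.exp (β * vc) * c = 1 := by
        rw [hc, ← Real.exp_add]; ring_nf; exact Real.exp_zero
      have hbca : b * c / a = (b / a) * c := by ring
      rw [hbca]
      nlinarith
    have hr0 : 0 < b * c / a := by positivity
    have h1 : Tendsto (fun N : ℕ => (b * c / a) ^ N) atTop (nhds 0) :=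
      tendsto_pow_atTop_nhds_zero_of_lt_one (by linarith) hr1
    have h2 : Tendsto (fun N : ℕ => c ^ N) atTop (nhds 0) :=
      tendsto_pow_atTop_nhds_zero_of_lt_one (by linarith) hc1
    have hnum : Tendsto (fun N : ℕ => vc * ((b * c / a) ^ N - 2 * c ^ N)) atTop
        (nhds (vc * (0 - 2 * 0))) :=
      ((h1.sub (h2.const_mul 2)).const_mul vc)
    have hden : Tendsto (fun N : ℕ => 2 + ((b * c / a) ^ N - 2 * c ^ N)) atTop
        (nhds (2 + (0 - 2 * 0))) :=
      tendsto_const_nhds.add (h1.sub (h2.const_mul 2))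
    have hmain := hnum.div hden (by norm_num)
    have hmain' : Tendsto (fun N : ℕ =>
        vc * ((b * c / a) ^ N - 2 * c ^ N) / (2 + ((b * c / a) ^ N - 2 * c ^ N)))
        atTop (nhds 0) := by simpa [Pi.div_def] using hmain
    apply hmain'.congr
    intro N
    have haN : (0:ℝ) < a ^ N := pow_pos ha N
    rw [hexp N, div_pow, mul_pow]
    field_simp
  · intro hβ0 hβ
    have hsb : a / b < 1 := by rw [div_lt_one hb]; linarith
    have hsb0 : 0 < a / b := by positivity
    have hlog : β * vc < Real.log (b / a) := by
      have := (lt_div_iff₀ hvc).mp hβ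
      linarith
    have hu1 : a / (b * c) < 1 := by
      rw [div_lt_one (by positivity)]
      have h1 : Real.exp (β * vc) < b / a := by
        calc Real.exp (β * vc) < Real.exp (Real.log (b / a)) := Real.exp_lt_exp.mpr hlog
        _ = b / a := Real.exp_log (by positivity)
      have h2 : Real.exp (β * vc) * c = 1 := by
        rw [hc, ← Real.exp_add]; ring_nf; exact Real.exp_zero
      have h3 : a * Real.exp (β * vc) < b := by
        rw [← mul_lt_mul_iff_left₀ ha] at h1 ⊢
        calc a * Real.exp (β * vc) * a = Real.exp (β * vc) * a * a := by ring
        _ < b / a * a * a := by nlinarith [Real.exp_pos (β * vc)]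
        _ = b * a := by field_simp
      nlinarith
    have hu0 : 0 < a / (b * c) := by positivity
    have h1 : Tendsto (fun N : ℕ => (a / b) ^ N) atTop (nhds 0) :=
      tendsto_pow_atTop_nhds_zero_of_lt_one (by linarith) hsb
    have h2 : Tendsto (fun N : ℕ => (a / (b * c)) ^ N) atTop (nhds 0) :=
      tendsto_pow_atTop_nhds_zero_of_lt_one (by linarith) hu1
    have hnum : Tendsto (fun N : ℕ => vc * (1 - 2 * (a / b) ^ N)) atTop
        (nhds (vc * (1 - 2 * 0))) :=
      (tendsto_const_nhds.sub (h1.const_mul 2)).const_mul vc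
    have hden : Tendsto (fun N : ℕ =>
        2 * (a / (b * c)) ^ N + (1 - 2 * (a / b) ^ N)) atTop
        (nhds (2 * 0 + (1 - 2 * 0))) :=
      (h2.const_mul 2).add (tendsto_const_nhds.sub (h1.const_mul 2))
    have hmain := hnum.div hden (by norm_num)
    have hmain' : Tendsto (fun N : ℕ =>
        vc * (1 - 2 * (a / b) ^ N) / (2 * (a / (b * c)) ^ N + (1 - 2 * (a / b) ^ N)))
        atTop (nhds vc) := by simpa [Pi.div_def] using hmain
    apply hmain'.congr
    intro N
    have hc1 : c < 1 := by
      rw [hc]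
      apply Real.exp_lt_one_iff.mpr
      nlinarith
    have hbN : (0:ℝ) < (b * c) ^ N := pow_pos (by positivity) N
    have hbN' : (0:ℝ) < b ^ N := pow_pos hb N
    have hcN : c ^ N ≤ 1 := pow_le_one₀ hc0.le hc1.le
    have hD1 : (0:ℝ) < 2 * a ^ N + (b ^ N - 2 * a ^ N) * c ^ N := by
      nlinarith [pow_pos ha N, pow_pos hc0 N]
    have hD2key : (2 * (a / (b * c)) ^ N + (1 - 2 * (a / b) ^ N)) * (b * c) ^ N
        = 2 * a ^ N + (b ^ N - 2 * a ^ N) * c ^ N := by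
      rw [div_pow, div_pow, mul_pow]
      field_simp
    have hD2 : (0:ℝ) < 2 * (a / (b * c)) ^ N + (1 - 2 * (a / b) ^ N) := by
      nlinarith
    rw [hexp N]
    rw [div_eq_div_iff hD2.ne' hD1.ne']
    rw [div_pow, div_pow, mul_pow]
    have hcN0 : (c:ℝ) ^ N ≠ 0 := (pow_pos hc0 N).ne'
    field_simp
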